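/- Let (X, μ) be a probability space, let 0 < p < ∞, and let (h_n) be a sequence in L^p(μ) converging almost everywhere to h ∈ L^p(μ). Then ∫|h_n − h|^p dμ → 0 if and only if ∫|h_n|^p dμ → ∫|h|^p dμ. -/

import Mathlib

open MeasureTheory Filter
open scoped ENNReal

/-- Generalized dominated convergence for `lintegral` (Fatou-based). -/
lemma aux_lintegral_gdct {X : Type*} [MeasurableSpace X] {μ : Measure X}
    {f : ℕ → X → ℝ≥0∞} {F : X → ℝ≥0∞} {g : ℕ → X → ℝ≥0∞} {G : X → ℝ≥0∞}
    (hfm : ∀ n, Measurable (f n)) (hFm : Measurable F)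
    (hgm : ∀ n, Measurable (g n)) (hGm : Measurable G)
    (hle : ∀ n x, f n x ≤ g n x)
    (hfF : ∀ᵐ x ∂μ, Tendsto (fun n => f n x) atTop (nhds (F x)))
    (hgG : ∀ᵐ x ∂μ, Tendsto (fun n => g n x) atTop (nhds (G x)))
    (hG : ∫⁻ x, G x ∂μ ≠ ∞)
    (hgi : Tendsto (fun n => ∫⁻ x, g n x ∂μ) atTop (nhds (∫⁻ x, G x ∂μ))) :
    Tendsto (fun n => ∫⁻ x, f n x ∂μ) atTop (nhds (∫⁻ x, F x ∂μ)) := by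
  set A := ∫⁻ x, F x ∂μ with hAdef
  set B := ∫⁻ x, G x ∂μ with hBdef
  have hFG : ∀ᵐ x ∂μ, F x ≤ G x := by
    filter_upwards [hfF, hgG] with x h1 h2
    exact le_of_tendsto_of_tendsto' h1 h2 (fun n => hle n x)
  have hAB : A ≤ B := lintegral_mono_ae hFG
  have hA : A ≠ ∞ := ne_top_of_le_ne_top hG hAB
  -- Fatou for the liminf side
  have h1 : A ≤ liminf (fun n => ∫⁻ x, f n x ∂μ) atTop := by
    calc A = ∫⁻ x, liminf (fun n => f n x) atTop ∂μ :=
          lintegral_congr_ae (hfF.mono fun x hx => hx.liminf_eq.symm)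
      _ ≤ _ := lintegral_liminf_le hfm
  -- Fatou applied to `g n - f n`
  have hGlt : ∀ᵐ x ∂μ, G x < ∞ := ae_lt_top hGm hG
  have hsubae : ∀ᵐ x ∂μ, Tendsto (fun n => g n x - f n x) atTop (nhds (G x - F x)) := by
    filter_upwards [hfF, hgG, hGlt] with x h1 h2 h3
    exact ENNReal.Tendsto.sub h2 h1 (Or.inl h3.ne)
  have key : B - A ≤ liminf (fun n => ∫⁻ x, (g n x - f n x) ∂μ) atTop := by
    have h2 : ∫⁻ x, (G x - F x) ∂μ = B - A := lintegral_sub hFm hA hFG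
    calc B - A = ∫⁻ x, liminf (fun n => g n x - f n x) atTop ∂μ := by
          rw [← h2]
          exact lintegral_congr_ae (hsubae.mono fun x hx => hx.liminf_eq.symm)
      _ ≤ _ := lintegral_liminf_le (fun n => (hgm n).sub (hfm n))
  -- decomposition of the integral of `g n`
  have hsum : ∀ n, (∫⁻ x, f n x ∂μ) + (∫⁻ x, (g n x - f n x) ∂μ) = ∫⁻ x, g n x ∂μ := by
    intro n
    rw [← lintegral_add_left (hfm n)]
    refine lintegral_congr fun x => ?_
    exact add_tsub_cancel_of_le (hle n x)
  -- limsup side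
  have h2 : limsup (fun n => ∫⁻ x, f n x ∂μ) atTop ≤ A := by
    refine ENNReal.le_of_forall_pos_le_add fun ε hε _ => ?_
    have hBe : B < B + ε := ENNReal.lt_add_right hG (by exact_mod_cast hε.ne')
    have hev : ∀ᶠ n in atTop, (∫⁻ x, g n x ∂μ) ≤ B + ε :=
      (hgi.eventually (eventually_le_nhds hBe))
    have hev2 : ∀ᶠ n in atTop,
        (∫⁻ x, f n x ∂μ) ≤ (B + ε) - ∫⁻ x, (g n x - f n x) ∂μ := by
      filter_upwards [hev] with n hn
      have hvfin : (∫⁻ x, (g n x - f n x) ∂μ) ≠ ∞ := by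
        have hle' : (∫⁻ x, (g n x - f n x) ∂μ) ≤ B + ε :=
          le_trans (lintegral_mono fun x => tsub_le_self) hn
        exact ne_top_of_le_ne_top (ENNReal.add_ne_top.2 ⟨hG, ENNReal.coe_ne_top⟩) hle'
      exact ENNReal.le_sub_of_add_le_right hvfin (by rw [hsum n]; exact hn)
    calc limsup (fun n => ∫⁻ x, f n x ∂μ) atTop
        ≤ limsup (fun n => (B + ε) - ∫⁻ x, (g n x - f n x) ∂μ) atTop :=
          limsup_le_limsup hev2
      _ = (B + ε) - liminf (fun n => ∫⁻ x, (g n x - f n x) ∂μ) atTop :=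
          ENNReal.limsup_const_sub atTop _ (by simp [ENNReal.add_ne_top, hG])
      _ ≤ (B + ε) - (B - A) := tsub_le_tsub_left key _
      _ = A + ε := by
          have hBA : B - A + (A + ε) = B + ε := by
            rw [← add_assoc, tsub_add_cancel_of_le hAB]
          rw [← hBA, ENNReal.add_sub_cancel_left (by simp [ENNReal.sub_ne_top, hG])]
  exact tendsto_of_le_liminf_of_limsup_le h1 h2

/-- Generalized dominated convergence for the Bochner integral of nonnegative functions. -/
lemma aux_integral_gdct {X : Type*} [MeasurableSpace X] {μ : Measure X}
    {f : ℕ → X → ℝ} {F : X → ℝ} {g : ℕ → X → ℝ} {G : X → ℝ}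
    (hfm : ∀ n, Measurable (f n)) (hFm : Measurable F)
    (hgm : ∀ n, Measurable (g n)) (hGm : Measurable G)
    (hf0 : ∀ n x, 0 ≤ f n x)
    (hle : ∀ n x, f n x ≤ g n x)
    (hfF : ∀ᵐ x ∂μ, Tendsto (fun n => f n x) atTop (nhds (F x)))
    (hgG : ∀ᵐ x ∂μ, Tendsto (fun n => g n x) atTop (nhds (G x)))
    (hgi : ∀ n, Integrable (g n) μ) (hGi : Integrable G μ)
    (htend : Tendsto (fun n => ∫ x, g n x ∂μ) atTop (nhds (∫ x, G x ∂μ))) :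
    Tendsto (fun n => ∫ x, f n x ∂μ) atTop (nhds (∫ x, F x ∂μ)) := by
  have hg0 : ∀ n x, 0 ≤ g n x := fun n x => (hf0 n x).trans (hle n x)
  have hF0 : ∀ᵐ x ∂μ, 0 ≤ F x := by
    filter_upwards [hfF] with x hx
    exact le_of_tendsto_of_tendsto' tendsto_const_nhds hx (fun n => hf0 n x)
  have hG0 : ∀ᵐ x ∂μ, 0 ≤ G x := by
    filter_upwards [hgG] with x hx
    exact le_of_tendsto_of_tendsto' tendsto_const_nhds hx (fun n => hg0 n x)
  have hfi : ∀ n, Integrable (f n) μ := fun n =>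
    (hgi n).mono' (hfm n).aestronglyMeasurable
      (Filter.Eventually.of_forall fun x => by
        rw [Real.norm_of_nonneg (hf0 n x)]; exact hle n x)
  -- pass to ℝ≥0∞
  have key : Tendsto (fun n => ∫⁻ x, ENNReal.ofReal (f n x) ∂μ) atTop
      (nhds (∫⁻ x, ENNReal.ofReal (F x) ∂μ)) := by
    refine aux_lintegral_gdct (fun n => (hfm n).ennreal_ofReal) hFm.ennreal_ofReal
      (fun n => (hgm n).ennreal_ofReal) hGm.ennreal_ofReal
      (fun n x => ENNReal.ofReal_le_ofReal (hle n x)) ?_ ?_ ?_ ?_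
    · filter_upwards [hfF] with x hx
      exact (ENNReal.continuous_ofReal.tendsto _).comp hx
    · filter_upwards [hgG] with x hx
      exact (ENNReal.continuous_ofReal.tendsto _).comp hx
    · rw [← ofReal_integral_eq_lintegral_ofReal hGi hG0]
      exact ENNReal.ofReal_ne_top
    · have : ∀ n, (∫⁻ x, ENNReal.ofReal (g n x) ∂μ) = ENNReal.ofReal (∫ x, g n x ∂μ) :=
        fun n => (ofReal_integral_eq_lintegral_ofReal (hgi n)
          (Filter.Eventually.of_forall (hg0 n))).symm
      simp only [this, ← ofReal_integral_eq_lintegral_ofReal hGi hG0]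
      exact (ENNReal.continuous_ofReal.tendsto _).comp htend
  -- back to ℝ
  have hFi : Integrable F μ := by
    have hFG : ∀ᵐ x ∂μ, F x ≤ G x := by
      filter_upwards [hfF, hgG] with x h1 h2
      exact le_of_tendsto_of_tendsto' h1 h2 (fun n => hle n x)
    refine hGi.mono' hFm.aestronglyMeasurable ?_
    filter_upwards [hF0, hFG] with x h1 h2
    rw [Real.norm_of_nonneg h1]; exact h2
  have hF' : (∫⁻ x, ENNReal.ofReal (F x) ∂μ) ≠ ∞ := by
    rw [← ofReal_integral_eq_lintegral_ofReal hFi hF0]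
    exact ENNReal.ofReal_ne_top
  have := (ENNReal.tendsto_toReal hF').comp key
  have heq : ∀ n, ((∫⁻ x, ENNReal.ofReal (f n x) ∂μ).toReal) = ∫ x, f n x ∂μ := by
    intro n
    rw [← ofReal_integral_eq_lintegral_ofReal (hfi n)
      (Filter.Eventually.of_forall (hf0 n)), ENNReal.toReal_ofReal
      (integral_nonneg (hf0 n))]
  have heqF : ((∫⁻ x, ENNReal.ofReal (F x) ∂μ).toReal) = ∫ x, F x ∂μ := by
    rw [← ofReal_integral_eq_lintegral_ofReal hFi hF0, ENNReal.toReal_ofReal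
      (integral_nonneg_of_ae hF0)]
  simpa only [Function.comp_def, heq, heqF] using this

/-- The elementary bound `‖a‖^p ≤ 2^p * (‖a - b‖^p + ‖b‖^p)`. -/
lemma aux_norm_rpow_bound (p : ℝ) (hp : 0 < p) (a b : ℂ) :
    ‖a‖ ^ p ≤ 2 ^ p * (‖a - b‖ ^ p + ‖b‖ ^ p) := by
  have h1 : ‖a‖ ≤ ‖a - b‖ + ‖b‖ := by
    calc ‖a‖ = ‖a - b + b‖ := by ring_nf
      _ ≤ ‖a - b‖ + ‖b‖ := norm_add_le _ _
  have h2 : ‖a - b‖ + ‖b‖ ≤ 2 * max ‖a - b‖ ‖b‖ := by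
    have := le_max_left ‖a - b‖ ‖b‖
    have := le_max_right ‖a - b‖ ‖b‖
    linarith
  have hm : (0:ℝ) ≤ max ‖a - b‖ ‖b‖ := le_max_of_le_right (norm_nonneg _)
  calc ‖a‖ ^ p ≤ (2 * max ‖a - b‖ ‖b‖) ^ p :=
        Real.rpow_le_rpow (norm_nonneg _) (h1.trans h2) hp.le
    _ = 2 ^ p * (max ‖a - b‖ ‖b‖) ^ p := Real.mul_rpow (by norm_num) hm
    _ ≤ 2 ^ p * (‖a - b‖ ^ p + ‖b‖ ^ p) := by
        refine mul_le_mul_of_nonneg_left ?_ (Real.rpow_nonneg (by norm_num) p)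
        rcases max_cases ‖a - b‖ ‖b‖ with ⟨hmax, _⟩ | ⟨hmax, _⟩ <;> rw [hmax]
        · nlinarith [Real.rpow_nonneg (norm_nonneg b) p]
        · nlinarith [Real.rpow_nonneg (norm_nonneg (a - b)) p]

/-- On a probability space, for `0 < p < ∞` and a sequence `h n` in `L^p` converging a.e.
to `h ∈ L^p`, one has `∫ |h n − h|^p → 0` iff `∫ |h n|^p → ∫ |h|^p`. -/
theorem Lp_convergence_iff_norm_convergence {X : Type*} [MeasurableSpace X]
    (μ : Measure X) [IsProbabilityMeasure μ]
    (p : ℝ) (hp : 0 < p) (h : ℕ → X → ℂ) (H : X → ℂ)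
    (hm : ∀ n, Measurable (h n)) (hM : Measurable H)
    (hint : ∀ n, Integrable (fun x => ‖h n x‖ ^ p) μ)
    (hInt : Integrable (fun x => ‖H x‖ ^ p) μ)
    (hae : ∀ᵐ x ∂μ, Tendsto (fun n => h n x) atTop (nhds (H x))) :
    Tendsto (fun n => ∫ x, ‖h n x - H x‖ ^ p ∂μ) atTop (nhds 0) ↔
      Tendsto (fun n => ∫ x, ‖h n x‖ ^ p ∂μ) atTop (nhds (∫ x, ‖H x‖ ^ p ∂μ)) := by
  -- continuity of `t ↦ t ^ p` at nonnegative points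
  have hrpow : ∀ t : ℝ, ContinuousAt (fun s : ℝ => s ^ p) t :=
    fun t => Real.continuousAt_rpow_const t p (Or.inr hp.le)
  -- measurability facts
  have hmeas_n : ∀ n, Measurable (fun x => ‖h n x‖ ^ p) :=
    fun n => (Real.continuous_rpow_const hp.le).measurable.comp ((hm n).norm)
  have hmeas_H : Measurable (fun x => ‖H x‖ ^ p) := (Real.continuous_rpow_const hp.le).measurable.comp (hM.norm)
  have hmeas_sub : ∀ n, Measurable (fun x => ‖h n x - H x‖ ^ p) :=
    fun n => (Real.continuous_rpow_const hp.le).measurable.comp (((hm n).sub hM).norm)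
  -- integrability of the difference terms
  have hint_sub : ∀ n, Integrable (fun x => ‖h n x - H x‖ ^ p) μ := by
    intro n
    refine Integrable.mono' (((hint n).add hInt).const_mul (2 ^ p))
      (hmeas_sub n).aestronglyMeasurable ?_
    refine Filter.Eventually.of_forall fun x => ?_
    rw [Real.norm_of_nonneg (Real.rpow_nonneg (norm_nonneg _) p)]
    have := aux_norm_rpow_bound p hp (h n x - H x) (-H x)
    simpa [sub_neg_eq_add, norm_neg] using this
  -- a.e. pointwise convergences
  have haeN : ∀ᵐ x ∂μ, Tendsto (fun n => ‖h n x‖ ^ p) atTop (nhds (‖H x‖ ^ p)) := by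
    filter_upwards [hae] with x hx
    exact ((hrpow ‖H x‖).tendsto).comp ((continuous_norm.tendsto _).comp hx)
  have haeS : ∀ᵐ x ∂μ, Tendsto (fun n => ‖h n x - H x‖ ^ p) atTop (nhds 0) := by
    filter_upwards [hae] with x hx
    have h0 : Tendsto (fun n => ‖h n x - H x‖) atTop (nhds 0) := by
      have h1 : Tendsto (fun n => h n x - H x) atTop (nhds 0) := by
        simpa using hx.sub_const (H x)
      have := (continuous_norm.tendsto (0:ℂ)).comp h1
      simpa [Function.comp_def] using this
    have := ((hrpow 0).tendsto).comp h0
    simpa [Real.zero_rpow hp.ne', Function.comp_def] using this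
  constructor
  · -- forward: ∫‖hₙ−H‖ᵖ → 0 implies ∫‖hₙ‖ᵖ → ∫‖H‖ᵖ
    intro htend
    refine aux_integral_gdct hmeas_n hmeas_H
      (g := fun n x => 2 ^ p * (‖h n x - H x‖ ^ p + ‖H x‖ ^ p))
      (G := fun x => 2 ^ p * (0 + ‖H x‖ ^ p))
      (fun n => (measurable_const.mul ((hmeas_sub n).add hmeas_H)))
      (measurable_const.mul (measurable_const.add hmeas_H))
      (fun n x => Real.rpow_nonneg (norm_nonneg _) p)
      (fun n x => aux_norm_rpow_bound p hp (h n x) (H x))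
      haeN ?_ (fun n => ((hint_sub n).add hInt).const_mul _)
      (((integrable_const (0:ℝ)).add hInt).const_mul _) ?_
    · filter_upwards [haeS] with x hx
      exact (hx.add_const (‖H x‖ ^ p)).const_mul (2 ^ p)
    · have h1 : ∀ n, (∫ x, 2 ^ p * (‖h n x - H x‖ ^ p + ‖H x‖ ^ p) ∂μ)
          = 2 ^ p * ((∫ x, ‖h n x - H x‖ ^ p ∂μ) + ∫ x, ‖H x‖ ^ p ∂μ) := by
        intro n
        rw [integral_const_mul, integral_add (hint_sub n) hInt]
      have h2 : (∫ x, 2 ^ p * (0 + ‖H x‖ ^ p) ∂μ)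
          = 2 ^ p * (0 + ∫ x, ‖H x‖ ^ p ∂μ) := by
        rw [integral_const_mul, integral_add (integrable_const 0) hInt, integral_zero]
      simp only [h1, h2]
      exact ((htend.add_const _).const_mul _)
  · -- backward: ∫‖hₙ‖ᵖ → ∫‖H‖ᵖ implies ∫‖hₙ−H‖ᵖ → 0
    intro htend
    have main : Tendsto (fun n => ∫ x, ‖h n x - H x‖ ^ p ∂μ) atTop
        (nhds (∫ x, (0:ℝ) ∂μ)) := by
      refine aux_integral_gdct hmeas_sub measurable_const
        (g := fun n x => 2 ^ p * (‖h n x‖ ^ p + ‖H x‖ ^ p))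
        (G := fun x => 2 ^ p * (‖H x‖ ^ p + ‖H x‖ ^ p))
        (fun n => (measurable_const.mul ((hmeas_n n).add hmeas_H)))
        (measurable_const.mul (hmeas_H.add hmeas_H))
        (fun n x => Real.rpow_nonneg (norm_nonneg _) p)
        (fun n x => by
          have := aux_norm_rpow_bound p hp (h n x - H x) (-H x)
          simpa [sub_neg_eq_add, norm_neg] using this)
        haeS ?_ (fun n => ((hint n).add hInt).const_mul _)
        ((hInt.add hInt).const_mul _) ?_
      · filter_upwards [haeN] with x hx
        exact (hx.add_const (‖H x‖ ^ p)).const_mul (2 ^ p)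
      · have h1 : ∀ n, (∫ x, 2 ^ p * (‖h n x‖ ^ p + ‖H x‖ ^ p) ∂μ)
            = 2 ^ p * ((∫ x, ‖h n x‖ ^ p ∂μ) + ∫ x, ‖H x‖ ^ p ∂μ) := by
          intro n
          rw [integral_const_mul, integral_add (hint n) hInt]
        have h2 : (∫ x, 2 ^ p * (‖H x‖ ^ p + ‖H x‖ ^ p) ∂μ)
            = 2 ^ p * ((∫ x, ‖H x‖ ^ p ∂μ) + ∫ x, ‖H x‖ ^ p ∂μ) := by
          rw [integral_const_mul, integral_add hInt hInt]
        simp only [h1, h2]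
        exact ((htend.add_const _).const_mul _)
    simpa using main
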